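/- (Lemma 1.7, existence, uniqueness and symmetry.) Let 𝕂 be ℝ or ℂ, V a 𝕂-vector space of finite dimension 2n, α a nondegenerate alternating bilinear form on V, r ≥ 1, and β an alternating (r+1)-linear form on V. Then there exists a unique alternating r-multilinear map h : Vʳ → V such that β(v₁,…,v_{r+1}) = α(h(v₁,…,v_r), v_{r+1}) for all v₁,…,v_{r+1} ∈ V; moreover this h satisfies α(h(v₁,…,v_r), v_{r+1}) = α(v_r, h(v₁,…,v_{r−1}, v_{r+1})) for all v₁,…,v_{r+1} ∈ V. -/

import Mathlib

/-- Lemma 1.7 (existence, uniqueness and symmetry): on a `2n`-dimensional vector space `V`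
over `𝕂 = ℝ` or `ℂ`, with `α` a nondegenerate alternating bilinear form and `β` an
alternating `(r+1)`-linear form (here written with `r+1 ≥ 1` arguments for `h`), there is a
unique alternating multilinear map `h : V^(r+1) → V` with
`β(v₁,…,v_{r+2}) = α(h(v₁,…,v_{r+1}), v_{r+2})`; moreover any such `h` satisfies
`α(h(v,a), b) = α(a, h(v,b))`. -/
theorem lemma_1_7 {𝕂 : Type*} [RCLike 𝕂] {V : Type*} [AddCommGroup V] [Module 𝕂 V]
    [FiniteDimensional 𝕂 V] {n : ℕ} (hdim : Module.finrank 𝕂 V = 2 * n)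
    (α : V →ₗ[𝕂] V →ₗ[𝕂] 𝕂) (halt : ∀ v, α v v = 0)
    (hnd : ∀ u, (∀ v, α u v = 0) → u = 0)
    (r : ℕ) (β : AlternatingMap 𝕂 V 𝕂 (Fin (r + 2))) :
    (∃! h : AlternatingMap 𝕂 V V (Fin (r + 1)),
        ∀ v : Fin (r + 2) → V,
          β v = α (h fun i => v i.castSucc) (v (Fin.last (r + 1)))) ∧
      ∀ h : AlternatingMap 𝕂 V V (Fin (r + 1)),
        (∀ v : Fin (r + 2) → V,
            β v = α (h fun i => v i.castSucc) (v (Fin.last (r + 1)))) →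
          ∀ (v : Fin r → V) (a b : V),
            α (h (Fin.snoc v a)) b = α a (h (Fin.snoc v b)) := by
  classical
  -- skew-symmetry of α
  have hskew : ∀ x y : V, α x y = - α y x := by
    intro x y
    have h := halt (x + y)
    simp only [map_add, LinearMap.add_apply, halt] at h
    linear_combination h
  have hndB : LinearMap.BilinForm.Nondegenerate α :=
    ⟨fun u hu => hnd u hu, fun y hy => hnd y (fun x => by rw [hskew, hy x, neg_zero])⟩
  let e := LinearMap.BilinForm.toDual α hndB
  have he : ∀ (f : Module.Dual 𝕂 V) (w : V), α (e.symm f) w = f w := fun f w =>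
    LinearMap.BilinForm.apply_toDual_symm_apply (hB := hndB) f w
  -- curry the last variable of β
  let g : AlternatingMap 𝕂 V (Module.Dual 𝕂 V) (Fin (r + 1)) :=
    { toMultilinearMap := β.toMultilinearMap.curryRight
      map_eq_zero_of_eq' := by
        intro v i j hij hne
        ext w
        have : (Fin.snoc v w : Fin (r + 2) → V) i.castSucc =
            (Fin.snoc v w : Fin (r + 2) → V) j.castSucc := by
          simp [Fin.snoc_castSucc, hij]
        simpa using β.map_eq_zero_of_eq _ this (by simpa using hne) }
  let h₀ : AlternatingMap 𝕂 V V (Fin (r + 1)) :=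
    (e.symm : Module.Dual 𝕂 V →ₗ[𝕂] V).compAlternatingMap g
  have hh₀ : ∀ (x : Fin (r + 1) → V) (w : V), α (h₀ x) w = β (Fin.snoc x w) := by
    intro x w
    have : α (h₀ x) w = (g x) w := he (g x) w
    simpa [g, MultilinearMap.curryRight_apply] using this
  have hprop : ∀ v : Fin (r + 2) → V,
      β v = α (h₀ fun i => v i.castSucc) (v (Fin.last (r + 1))) := by
    intro v
    rw [hh₀]
    congr 1
    exact (Fin.snoc_init_self v).symm
  refine ⟨⟨h₀, hprop, ?_⟩, ?_⟩
  · -- uniqueness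
    intro h' hβ'
    ext x
    have key : ∀ w, α (h' x) w = α (h₀ x) w := by
      intro w
      rw [hh₀]
      have := hβ' (Fin.snoc x w)
      simp only [Fin.snoc_castSucc, Fin.snoc_last] at this
      exact this.symm
    have : ∀ w, α (h' x - h₀ x) w = 0 := by
      intro w; simp [map_sub, key w]
    have := hnd _ this
    exact sub_eq_zero.mp this
  · -- symmetry
    intro h hβ v a b
    have h1 : α (h (Fin.snoc v a)) b = β (Fin.snoc (Fin.snoc v a) b) := by
      have := hβ (Fin.snoc (Fin.snoc v a) b)
      simp only [Fin.snoc_castSucc, Fin.snoc_last] at this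
      exact this.symm
    have h2 : α (h (Fin.snoc v b)) a = β (Fin.snoc (Fin.snoc v b) a) := by
      have := hβ (Fin.snoc (Fin.snoc v b) a)
      simp only [Fin.snoc_castSucc, Fin.snoc_last] at this
      exact this.symm
    have hswap : β (Fin.snoc (Fin.snoc v a) b) = - β (Fin.snoc (Fin.snoc v b) a) := by
      have hne : (Fin.last r).castSucc ≠ Fin.last (r + 1) :=
        (Fin.castSucc_lt_last _).ne
      have := β.map_swap (Fin.snoc (Fin.snoc v b) a) hne
      have heq : (Fin.snoc (Fin.snoc v b) a : Fin (r + 2) → V) ∘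
          Equiv.swap (Fin.last r).castSucc (Fin.last (r + 1)) =
          Fin.snoc (Fin.snoc v a) b := by
        funext i
        refine Fin.lastCases ?_ (fun j => ?_) i
        · simp [Equiv.swap_apply_right]
        · refine Fin.lastCases ?_ (fun k => ?_) j
          · simp [Equiv.swap_apply_left]
          · have h1 : k.castSucc.castSucc ≠ (Fin.last r).castSucc := by
              simp [Fin.castSucc_inj]
            have h2 : k.castSucc.castSucc ≠ Fin.last (r + 1) :=
              (Fin.castSucc_lt_last _).ne
            simp [Equiv.swap_apply_of_ne_of_ne h1 h2]
      rw [heq] at this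
      rw [this]
    rw [h1, hswap, ← h2, hskew (h (Fin.snoc v b)) a, neg_neg]
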